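/- Let H : ℝ^{m×n} × ℝ^{m×n} → ℝ be continuously differentiable, and for (Q, P) let (∇_Q H(Q,P), ∇_P H(Q,P)) denote the Frobenius gradients, i.e., the Fréchet derivative of H at (Q,P) applied to (X, Y) equals ⟨∇_Q H(Q,P), X⟩_F + ⟨∇_P H(Q,P), Y⟩_F. Let Û ∈ ℂ^{m×k}, V̂ ∈ ℂ^{n×k} satisfy Û*Û = I_k, V̂*V̂ = I_k, and let S : ℝ → ℂ^{k×k} be differentiable on [t0, t1] such that, with Ẑ(t) = Û S(t) V̂*, Q(t) = Re Ẑ(t), P(t) = Im Ẑ(t) (entrywise real and imaginary parts), S satisfies S'(t) = −i Û* (∇_Q H(Q(t),P(t)) + i ∇_P H(Q(t),P(t))) V̂, where the real gradient matrices are regarded as complex matrices. Then H(Q(t), P(t)) is constant on [t0, t1]. -/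

import Mathlib

open Matrix

attribute [local instance] Matrix.frobeniusSeminormedAddCommGroup
  Matrix.frobeniusNormedAddCommGroup Matrix.frobeniusNormedSpace

/-- The Frobenius inner product `⟨A, B⟩_F = trace(Aᵀ B)`. -/
noncomputable def frobInner {m n : ℕ} (A B : Matrix (Fin m) (Fin n) ℝ) : ℝ :=
  (Aᵀ * B).trace

noncomputable def matEquiv (m n : ℕ) :
    Matrix (Fin m) (Fin n) ℝ ≃L[ℝ] (Fin m → Fin n → ℝ) :=
  LinearEquiv.toContinuousLinearEquiv (Matrix.ofLinearEquiv ℝ).symm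

lemma hasDerivAt_matrix {m n : ℕ} {f : ℝ → Matrix (Fin m) (Fin n) ℝ}
    {f' : Matrix (Fin m) (Fin n) ℝ} {t : ℝ}
    (h : ∀ i j, HasDerivAt (fun s => f s i j) (f' i j) t) :
    HasDerivAt f f' t := by
  have hpi : HasDerivAt (fun s => (fun i j => f s i j : Fin m → Fin n → ℝ))
      (fun i j => f' i j) t := by
    rw [hasDerivAt_pi]
    intro i
    rw [hasDerivAt_pi]
    intro j
    exact h i j
  exact ((matEquiv m n).symm.hasFDerivAt.comp_hasDerivAt t hpi : _)

lemma frob_re_trace {m n : ℕ} (A B : Matrix (Fin m) (Fin n) ℝ) (W : Matrix (Fin m) (Fin n) ℂ) :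
    frobInner A (W.map Complex.re) + frobInner B (W.map Complex.im)
      = (((A.map (Complex.ofReal) + Complex.I • B.map Complex.ofReal)ᴴ * W).trace).re := by
  simp only [frobInner, Matrix.trace, Matrix.diag, Matrix.mul_apply, Matrix.transpose_apply,
    Matrix.conjTranspose_apply, Matrix.map_apply, Matrix.add_apply, Matrix.smul_apply,
    map_add, Complex.re_sum]
  rw [← Finset.sum_add_distrib]
  refine Finset.sum_congr rfl fun j _ => ?_
  rw [← Finset.sum_add_distrib]
  refine Finset.sum_congr rfl fun i _ => ?_
  simp [Complex.mul_re, Complex.add_re, Complex.add_im, Complex.mul_im]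

lemma re_trace_zero {m n k : ℕ} (G : Matrix (Fin m) (Fin n) ℂ)
    (U : Matrix (Fin m) (Fin k) ℂ) (V : Matrix (Fin n) (Fin k) ℂ) :
    ((Gᴴ * (U * ((-Complex.I) • (Uᴴ * G * V)) * Vᴴ)).trace).re = 0 := by
  set M := Uᴴ * G * V with hM
  have h1 : Gᴴ * (U * ((-Complex.I) • M) * Vᴴ) = (-Complex.I) • (Gᴴ * U * M * Vᴴ) := by
    rw [Matrix.mul_smul, Matrix.smul_mul, Matrix.mul_smul]
    simp only [Matrix.mul_assoc, hM]
  rw [h1, Matrix.trace_smul]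
  have h2 : (Gᴴ * U * M * Vᴴ).trace = (Mᴴ * M).trace := by
    rw [Matrix.trace_mul_comm]
    congr 1
    rw [hM, Matrix.conjTranspose_mul, Matrix.conjTranspose_mul, Matrix.conjTranspose_conjTranspose,
      Matrix.mul_assoc, Matrix.mul_assoc]
    simp only [Matrix.mul_assoc]
  rw [h2]
  have h3 : ((Mᴴ * M).trace).im = 0 := by
    simp only [Matrix.trace, Matrix.diag, Matrix.mul_apply, Matrix.conjTranspose_apply,
      Complex.im_sum]
    refine Finset.sum_eq_zero fun j _ => Finset.sum_eq_zero fun i _ => ?_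
    simp [Complex.mul_im, Complex.conj_re, Complex.conj_im]
    ring
  have : (-Complex.I) • ((Mᴴ * M).trace) = -Complex.I * (Mᴴ * M).trace := rfl
  rw [this]
  simp [Complex.mul_re, h3]

lemma hasDerivAt_entry {m n k : ℕ} (U : Matrix (Fin m) (Fin k) ℂ) (V : Matrix (Fin n) (Fin k) ℂ)
    {S : ℝ → Matrix (Fin k) (Fin k) ℂ} {D : Matrix (Fin k) (Fin k) ℂ} {t : ℝ}
    (h : ∀ a b, HasDerivAt (fun s => S s a b) (D a b) t) (i : Fin m) (j : Fin n) :
    HasDerivAt (fun s => (U * S s * Vᴴ) i j) ((U * D * Vᴴ) i j) t := by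
  simp only [Matrix.mul_apply]
  refine HasDerivAt.fun_sum fun c _ => ?_
  refine HasDerivAt.mul_const ?_ _
  exact HasDerivAt.fun_sum fun a _ => (h a c).const_mul (U i a)

/-- Core of Theorem 7: the Galerkin S-step of the complex rank-adaptive integrator applied
to the Schrödinger-form reformulation `i Ż = ∇_Q H + i ∇_P H` of the Hamiltonian system
conserves the Hamiltonian `H(Q(t), P(t))` exactly. -/
theorem sStep_hamiltonian_conservation
    {m n k : ℕ} {t0 t1 : ℝ}
    (H : Matrix (Fin m) (Fin n) ℝ × Matrix (Fin m) (Fin n) ℝ → ℝ)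
    (GQ GP : Matrix (Fin m) (Fin n) ℝ × Matrix (Fin m) (Fin n) ℝ → Matrix (Fin m) (Fin n) ℝ)
    (hH : Differentiable ℝ H)
    (hgrad : ∀ QP : Matrix (Fin m) (Fin n) ℝ × Matrix (Fin m) (Fin n) ℝ,
      ∀ X Y : Matrix (Fin m) (Fin n) ℝ,
        fderiv ℝ H QP (X, Y) = frobInner (GQ QP) X + frobInner (GP QP) Y)
    (Uhat : Matrix (Fin m) (Fin k) ℂ) (Vhat : Matrix (Fin n) (Fin k) ℂ)
    (hU : Uhatᴴ * Uhat = 1) (hV : Vhatᴴ * Vhat = 1)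
    (S : ℝ → Matrix (Fin k) (Fin k) ℂ)
    (Q P : ℝ → Matrix (Fin m) (Fin n) ℝ)
    (hQ : ∀ t, Q t = (Uhat * S t * Vhatᴴ).map Complex.re)
    (hP : ∀ t, P t = (Uhat * S t * Vhatᴴ).map Complex.im)
    (hS : ∀ t ∈ Set.Icc t0 t1, ∀ i j,
      HasDerivAt (fun s => S s i j)
        (((-Complex.I) • (Uhatᴴ *
          ((GQ (Q t, P t)).map Complex.ofReal
            + Complex.I • (GP (Q t, P t)).map Complex.ofReal) * Vhat)) i j) t) :
    ∀ t ∈ Set.Icc t0 t1, H (Q t, P t) = H (Q t0, P t0) := by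
  have key : ∀ t ∈ Set.Icc t0 t1, HasDerivAt (fun s => H (Q s, P s)) 0 t := by
    intro t ht
    set G : Matrix (Fin m) (Fin n) ℂ :=
      (GQ (Q t, P t)).map Complex.ofReal + Complex.I • (GP (Q t, P t)).map Complex.ofReal
      with hG
    set D : Matrix (Fin k) (Fin k) ℂ := (-Complex.I) • (Uhatᴴ * G * Vhat) with hD
    have hSD : ∀ a b, HasDerivAt (fun s => S s a b) (D a b) t := fun a b => hS t ht a b
    set Zd : Matrix (Fin m) (Fin n) ℂ := Uhat * D * Vhatᴴ with hZd
    have hZentry : ∀ i j, HasDerivAt (fun s => (Uhat * S s * Vhatᴴ) i j) (Zd i j) t :=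
      hasDerivAt_entry Uhat Vhat hSD
    have hQd : HasDerivAt Q (Zd.map Complex.re) t := by
      refine hasDerivAt_matrix fun i j => ?_
      have h1 := Complex.reCLM.hasFDerivAt.comp_hasDerivAt t (hZentry i j)
      simp_rw [hQ, Matrix.map_apply]
      exact h1
    have hPd : HasDerivAt P (Zd.map Complex.im) t := by
      refine hasDerivAt_matrix fun i j => ?_
      have h1 := Complex.imCLM.hasFDerivAt.comp_hasDerivAt t (hZentry i j)
      simp_rw [hP, Matrix.map_apply]
      exact h1
    have hc : HasDerivAt (fun s => (Q s, P s)) (Zd.map Complex.re, Zd.map Complex.im) t :=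
      hQd.prodMk hPd
    have hHd := ((hH (Q t, P t)).hasFDerivAt).comp_hasDerivAt t hc
    have hval : fderiv ℝ H (Q t, P t) (Zd.map Complex.re, Zd.map Complex.im) = 0 := by
      rw [hgrad, frob_re_trace, ← hG]
      have : Zd = Uhat * ((-Complex.I) • (Uhatᴴ * G * Vhat)) * Vhatᴴ := by rw [hZd, hD]
      rw [this]
      exact re_trace_zero G Uhat Vhat
    exact hHd.congr_deriv hval
  intro t ht
  exact constant_of_has_deriv_right_zero
    (fun s hs => (key s hs).continuousAt.continuousWithinAt)
    (fun s hs => (key s (Set.mem_Icc_of_Ico hs)).hasDerivWithinAt) t ht
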